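/- arXiv:0804.1573 — 7 statements merged into one kernel-verified Lean document; each statement's English description precedes it below -/
import Mathlib

section
/- Let X be a finite set, P = (x_1,...,x_k) a sequence in X, and μ a finitely supported nonnegative measure on subsets of X defining a map f : X → L_1 with ‖f(u)-f(v)‖_1 = Σ_S μ(S)·|1_S(u)-1_S(v)|. If f is ε-efficient on P (i.e. Σ_{i=1}^{k-1} ‖f(x_i)-f(x_{i+1})‖_1 ≤ (1+ε)·‖f(x_1)-f(x_k)‖_1), then Σ_{S : P not monotone w.r.t. S} μ(S)·|1_S(x_1)-1_S(x_k)| ≤ ε·‖f(x_1)-f(x_k)‖_1. -/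
/-- Indicator function of a finite set `S`, with values in `ℝ`. -/
def ind {X : Type*} [DecidableEq X] (S : Finset X) (v : X) : ℝ := if v ∈ S then 1 else 0

/-- The `L₁` distance determined by a cut measure `μ` on a finite set `X`:
`‖f u - f v‖₁ = Σ_S μ(S)·|1_S(u) - 1_S(v)|`. -/
def cutDist {X : Type*} [Fintype X] [DecidableEq X] (μ : Finset X → ℝ) (u v : X) : ℝ :=
  ∑ S : Finset X, μ S * |ind S u - ind S v|

/-- A sequence `x 0, …, x (k-1)` is monotone with respect to the cut `S` if its
indicator sequence changes value at most once. -/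
def MonotoneWrtCut {X : Type*} [DecidableEq X] (S : Finset X) (x : ℕ → X) (k : ℕ) : Prop :=
  ((Finset.range (k - 1)).filter (fun i => ind S (x i) ≠ ind S (x (i + 1)))).card ≤ 1

lemma abs_ind_sub {X : Type*} [DecidableEq X] (S : Finset X) (u v : X) :
    |ind S u - ind S v| = if ind S u = ind S v then 0 else 1 := by
  unfold ind
  by_cases h : u ∈ S <;> by_cases h' : v ∈ S <;> simp [h, h'] <;> norm_num

open Classical in
/-- If the `L₁` embedding `f` associated to a nonnegative cut measure `μ`
is `ε`-efficient on the sequence `P = (x₁,…,x_k)`, then the cuts with respect to which `P`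
fails to be monotone carry at most `ε·‖f(x₁)-f(x_k)‖₁` of the separation measure
`μ^{x₁|x_k}`. -/
theorem stmt2 {X : Type*} [Fintype X] [DecidableEq X] (μ : Finset X → ℝ)
    (hμ : ∀ S, 0 ≤ μ S) (x : ℕ → X) (k : ℕ) (hk : 1 ≤ k) (ε : ℝ) (hε : 0 ≤ ε)
    (heff : ∑ i ∈ Finset.range (k - 1), cutDist μ (x i) (x (i + 1)) ≤
      (1 + ε) * cutDist μ (x 0) (x (k - 1))) :
    ∑ S ∈ Finset.univ.filter (fun S : Finset X => ¬ MonotoneWrtCut S x k),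
        μ S * |ind S (x 0) - ind S (x (k - 1))| ≤
      ε * cutDist μ (x 0) (x (k - 1)) := by
  set c : Finset X → ℝ := fun S => ∑ i ∈ Finset.range (k - 1), |ind S (x i) - ind S (x (i+1))|
    with hc
  set d : Finset X → ℝ := fun S => |ind S (x 0) - ind S (x (k - 1))| with hd
  -- c S is the number of sign changes
  have hcard : ∀ S : Finset X, c S =
      ((Finset.range (k - 1)).filter (fun i => ind S (x i) ≠ ind S (x (i + 1)))).card := by
    intro S
    rw [hc]
    simp only [abs_ind_sub]
    rw [Finset.sum_ite, Finset.sum_const, Finset.sum_const]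
    simp [Finset.filter_not]
  have hdc : ∀ S, d S ≤ c S := by
    intro S
    have := Finset.sum_range_sub' (fun i => ind S (x i)) (k - 1)
    calc d S = |∑ i ∈ Finset.range (k-1), (ind S (x i) - ind S (x (i+1)))| := by
              rw [hd, this]
      _ ≤ c S := Finset.abs_sum_le_sum_abs _ _
  have hd1 : ∀ S, d S ≤ 1 := by
    intro S
    simp only [hd, abs_ind_sub]
    split <;> norm_num
  -- swap sums in heff
  have hswap : ∑ i ∈ Finset.range (k - 1), cutDist μ (x i) (x (i + 1)) =
      ∑ S : Finset X, μ S * c S := by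
    unfold cutDist
    rw [Finset.sum_comm]
    simp [hc, Finset.mul_sum]
  have hDdef : cutDist μ (x 0) (x (k - 1)) = ∑ S : Finset X, μ S * d S := rfl
  have key : ∑ S : Finset X, μ S * (c S - d S) ≤ ε * cutDist μ (x 0) (x (k - 1)) := by
    have : ∑ S : Finset X, μ S * (c S - d S)
        = (∑ S : Finset X, μ S * c S) - ∑ S : Finset X, μ S * d S := by
      rw [← Finset.sum_sub_distrib]
      congr 1; ext S; ring
    rw [this, ← hDdef, ← hswap]
    linarith [heff]
  refine le_trans ?_ key
  refine le_trans (Finset.sum_le_sum ?_)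
    (Finset.sum_le_sum_of_subset_of_nonneg (Finset.filter_subset _ _) ?_)
  · intro S hS
    simp only [Finset.mem_filter, MonotoneWrtCut, not_le] at hS
    have h2 : (2 : ℝ) ≤ c S := by
      rw [hcard S]
      exact_mod_cast hS.2
    have : d S ≤ c S - d S := by linarith [hd1 S]
    exact mul_le_mul_of_nonneg_left this (hμ S)
  · intro S _ _
    exact mul_nonneg (hμ S) (by linarith [hdc S])
end

section
/- Let n ≥ 2 and 0 < ε < 1/2. Let f : V(K_{2,n}) → L_1 be a map that is (ε/n)-efficient on each of the n geodesics s–m_i–t. Then the distortion of f satisfies dist(f) ≥ 2 - 2/n - 2ε. -/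
open MeasureTheory

set_option linter.unusedSectionVars false

section Aux

variable {ι : Type*} [DecidableEq ι]

lemma double_insert (F : ι → ι → ℝ) (T : Finset ι) (i : ι) (hi : i ∉ T) :
    ∑ x ∈ insert i T, ∑ y ∈ insert i T, F x y
      = F i i + (∑ x ∈ T, (F i x + F x i)) + ∑ x ∈ T, ∑ y ∈ T, F x y := by
  rw [Finset.sum_insert hi, Finset.sum_insert hi]
  have h : ∑ x ∈ T, ∑ y ∈ insert i T, F x y = ∑ x ∈ T, (F x i + ∑ y ∈ T, F x y) := by
    refine Finset.sum_congr rfl fun x _ => ?_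
    rw [Finset.sum_insert hi]
  rw [h, Finset.sum_add_distrib, Finset.sum_add_distrib]
  ring

lemma interval_bound (a b : ℝ) (hab : a ≤ b) :
    ∀ (N : ℕ) (s : Finset ι), s.card ≤ N → ∀ y : ι → ℝ, (∀ i ∈ s, a ≤ y i ∧ y i ≤ b) →
    ∑ i ∈ s, ∑ j ∈ s, |y i - y j| ≤ (s.card ^ 2 : ℝ) / 2 * (b - a) := by
  intro N
  induction N with
  | zero =>
    intro s hs y hy
    have : s = ∅ := Finset.card_eq_zero.mp (Nat.le_zero.mp hs)
    subst this; simp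
  | succ N ihN =>
    intro s hs y hy
    by_cases h1 : s.card ≤ 1
    · have hz : ∑ i ∈ s, ∑ j ∈ s, |y i - y j| = 0 := by
        apply Finset.sum_eq_zero; intro i hi
        apply Finset.sum_eq_zero; intro j hj
        rw [Finset.card_le_one] at h1
        rw [h1 i hi j hj]; simp
      rw [hz]
      have : (0:ℝ) ≤ b - a := by linarith
      positivity
    · push_neg at h1
      have hsne : s.Nonempty := Finset.card_pos.mp (by omega)
      obtain ⟨i0, hi0s, hmin⟩ := s.exists_min_image y hsne
      have hne : (s.erase i0).Nonempty := Finset.card_pos.mp (by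
        rw [Finset.card_erase_of_mem hi0s]; omega)
      obtain ⟨i1, hi1, hmax⟩ := (s.erase i0).exists_max_image y hne
      set s' := (s.erase i0).erase i1 with hs'def
      have hi1s : i1 ∈ s := Finset.mem_of_mem_erase hi1
      have hne01 : i1 ≠ i0 := Finset.ne_of_mem_erase hi1
      have hi1not : i1 ∉ s' := Finset.notMem_erase _ _
      have hi0not : i0 ∉ insert i1 s' := by
        simp only [Finset.mem_insert, not_or]
        refine ⟨hne01.symm, fun h => ?_⟩
        exact Finset.notMem_erase i0 s (Finset.mem_of_mem_erase h)
      have hins : insert i1 s' = s.erase i0 := Finset.insert_erase hi1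
      have hins0 : insert i0 (insert i1 s') = s := by
        rw [hins, Finset.insert_erase hi0s]
      have hcard : s.card = s'.card + 2 := by
        have h2 : (s.erase i0).card = s.card - 1 := Finset.card_erase_of_mem hi0s
        have h3 : s'.card = (s.erase i0).card - 1 := Finset.card_erase_of_mem hi1
        omega
      have hsub' : s' ⊆ s := fun x hx =>
        Finset.mem_of_mem_erase (Finset.mem_of_mem_erase hx)
      have hy0 := hy i0 hi0s
      have hy1 := hy i1 hi1s
      have IH := ihN s' (by omega) y (fun i hi => hy i (hsub' hi))
      -- pointwise cross bound
      have hcross : ∀ x ∈ s', |y i0 - y x| + |y x - y i0| + (|y i1 - y x| + |y x - y i1|)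
          ≤ 2 * (b - a) := by
        intro x hx
        have hxs : x ∈ s := hsub' hx
        have h01 : y i0 ≤ y x := hmin x hxs
        have h02 : y x ≤ y i1 := hmax x (Finset.mem_of_mem_erase hx)
        have hb1 : a ≤ y i0 := hy0.1
        have hb2 : y i1 ≤ b := hy1.2
        rw [abs_of_nonpos (by linarith), abs_of_nonneg (by linarith),
          abs_of_nonneg (by linarith), abs_of_nonpos (by linarith)]
        linarith
      have hsum : ∑ x ∈ s', (|y i0 - y x| + |y x - y i0| + (|y i1 - y x| + |y x - y i1|))
          ≤ (s'.card : ℝ) * (2 * (b - a)) := by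
        have := Finset.sum_le_card_nsmul s' _ _ hcross
        rwa [nsmul_eq_mul] at this
      have hA : |y i0 - y i1| ≤ b - a := by
        rw [abs_le]; constructor <;> [linarith [hy0.1, hy1.2]; linarith [hy0.2, hy1.1]]
      have hA' : |y i1 - y i0| ≤ b - a := by
        rw [abs_sub_comm]; exact hA
      rw [← hins0, double_insert _ _ _ hi0not, Finset.sum_insert hi1not,
        double_insert _ _ _ hi1not, Finset.card_insert_of_notMem hi0not,
        Finset.card_insert_of_notMem hi1not]
      rw [Finset.sum_add_distrib] at hsum
      rw [Finset.sum_add_distrib] at hsum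
      push_cast
      have hba : (0:ℝ) ≤ b - a := by linarith
      have e1 : ∀ x, |y x - y i1| = |y i1 - y x| := fun x => abs_sub_comm _ _
      simp only [sub_self, abs_zero] at *
      nlinarith [IH, hsum, hA, hA', Finset.sum_add_distrib (s := s')
        (f := fun x => |y i0 - y x|) (g := fun x => |y x - y i0|)]

lemma clamp_le (a b x : ℝ) (hab : a ≤ b) :
    2 * |x - max a (min b x)| ≤ |x - a| + |x - b| - (b - a) := by
  rcases le_total x a with h | h
  · rw [min_eq_right (h.trans hab), max_eq_left h,
      abs_of_nonpos (by linarith : x - a ≤ 0), abs_of_nonpos (by linarith : x - b ≤ 0)]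
    linarith
  · rcases le_total b x with h2 | h2
    · rw [min_eq_left h2, max_eq_right hab,
        abs_of_nonneg (by linarith : (0:ℝ) ≤ x - b), abs_of_nonneg (by linarith : (0:ℝ) ≤ x - a)]
      linarith
    · rw [min_eq_right h2, max_eq_right h, sub_self, abs_zero,
        abs_of_nonneg (by linarith : (0:ℝ) ≤ x - a), abs_of_nonpos (by linarith : x - b ≤ 0)]
      linarith

lemma key_real_aux (a b : ℝ) (hab : a ≤ b) (s : Finset ι) (x : ι → ℝ) :
    ∑ i ∈ s, ∑ j ∈ s, |x i - x j| ≤ (s.card ^ 2 : ℝ) / 2 * (b - a)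
      + s.card * ∑ i ∈ s, (|x i - a| + |x i - b| - (b - a)) := by
  set y : ι → ℝ := fun i => max a (min b (x i)) with hy
  have hyi : ∀ i ∈ s, a ≤ y i ∧ y i ≤ b := by
    intro i _
    exact ⟨le_max_left _ _, max_le hab (min_le_left _ _)⟩
  have hIB := interval_bound a b hab s.card s le_rfl y hyi
  have hd : ∀ i, 2 * |x i - y i| ≤ |x i - a| + |x i - b| - (b - a) :=
    fun i => clamp_le a b (x i) hab
  have tri : ∀ i j, |x i - x j| ≤ |y i - y j| + (|x i - y i| + |x j - y j|) := by
    intro i j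
    have t1 : |x i - x j| ≤ |x i - y i| + |y i - x j| := abs_sub_le _ _ _
    have t2 : |y i - x j| ≤ |y i - y j| + |y j - x j| := abs_sub_le _ _ _
    have t3 : |y j - x j| = |x j - y j| := abs_sub_comm _ _
    linarith
  have step1 : ∀ i ∈ s, ∑ j ∈ s, |x i - x j|
      ≤ ∑ j ∈ s, |y i - y j| + ∑ j ∈ s, (|x i - y i| + |x j - y j|) := by
    intro i _
    rw [← Finset.sum_add_distrib]
    exact Finset.sum_le_sum fun j _ => tri i j
  have expand : ∑ i ∈ s, ∑ j ∈ s, (|x i - y i| + |x j - y j|)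
      = 2 * ((s.card : ℝ) * ∑ i ∈ s, |x i - y i|) := by
    simp only [Finset.sum_add_distrib, Finset.sum_const, nsmul_eq_mul]
    rw [← Finset.mul_sum]
    ring
  have hd2 : 2 * ∑ i ∈ s, |x i - y i| ≤ ∑ i ∈ s, (|x i - a| + |x i - b| - (b - a)) := by
    rw [Finset.mul_sum]
    exact Finset.sum_le_sum fun i _ => hd i
  have hcn : (0:ℝ) ≤ s.card := Nat.cast_nonneg _
  calc ∑ i ∈ s, ∑ j ∈ s, |x i - x j|
      ≤ ∑ i ∈ s, (∑ j ∈ s, |y i - y j| + ∑ j ∈ s, (|x i - y i| + |x j - y j|)) :=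
        Finset.sum_le_sum step1
    _ = ∑ i ∈ s, ∑ j ∈ s, |y i - y j| + ∑ i ∈ s, ∑ j ∈ s, (|x i - y i| + |x j - y j|) :=
        Finset.sum_add_distrib
    _ ≤ (s.card ^ 2 : ℝ) / 2 * (b - a) + 2 * ((s.card : ℝ) * ∑ i ∈ s, |x i - y i|) := by
        rw [expand]; exact add_le_add hIB le_rfl
    _ ≤ (s.card ^ 2 : ℝ) / 2 * (b - a) + s.card * ∑ i ∈ s, (|x i - a| + |x i - b| - (b - a)) := by
        have := mul_le_mul_of_nonneg_left hd2 hcn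
        nlinarith [this]

lemma key_real (a b : ℝ) (s : Finset ι) (x : ι → ℝ) :
    ∑ i ∈ s, ∑ j ∈ s, |x i - x j| ≤ (s.card ^ 2 : ℝ) / 2 * |a - b|
      + s.card * ∑ i ∈ s, (|x i - a| + |x i - b| - |a - b|) := by
  rcases le_total a b with hab | hab
  · rw [abs_of_nonpos (sub_nonpos.mpr hab), neg_sub]
    exact key_real_aux a b hab s x
  · rw [abs_of_nonneg (sub_nonneg.mpr hab)]
    have h := key_real_aux b a hab s x
    have comm : ∀ i, |x i - b| + |x i - a| - (a - b) = |x i - a| + |x i - b| - (a - b) :=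
      fun i => by ring
    simp only [comm] at h
    exact h

end Aux

lemma norm_key {Ω : Type*} [MeasurableSpace Ω] {μ : Measure Ω} (n : ℕ)
    (S T : Lp ℝ 1 μ) (m : Fin n → Lp ℝ 1 μ) :
    ∑ i, ∑ j, ‖m i - m j‖ ≤ (n ^ 2 : ℝ) / 2 * ‖S - T‖
      + n * ∑ i, (‖m i - S‖ + ‖m i - T‖ - ‖S - T‖) := by
  have hI : ∀ g : Lp ℝ 1 μ, Integrable (fun ω => ‖g ω‖) μ :=
    fun g => (L1.integrable_coeFn g).norm
  have hN : ∀ g : Lp ℝ 1 μ, ‖g‖ = ∫ ω, ‖g ω‖ ∂μ := fun g => L1.norm_eq_integral_norm g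
  have intExc : ∀ i : Fin n,
      Integrable (fun ω => ‖(m i - S : Lp ℝ 1 μ) ω‖ + ‖(m i - T : Lp ℝ 1 μ) ω‖
        - ‖(S - T : Lp ℝ 1 μ) ω‖) μ :=
    fun i => ((hI _).add (hI _)).sub (hI _)
  have intF : Integrable (fun ω => ∑ i : Fin n, ∑ j : Fin n, ‖(m i - m j : Lp ℝ 1 μ) ω‖) μ :=
    integrable_finset_sum _ fun i _ => integrable_finset_sum _ fun j _ => hI _
  have intG : Integrable (fun ω => (n ^ 2 : ℝ) / 2 * ‖(S - T : Lp ℝ 1 μ) ω‖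
      + n * ∑ i : Fin n, (‖(m i - S : Lp ℝ 1 μ) ω‖ + ‖(m i - T : Lp ℝ 1 μ) ω‖
        - ‖(S - T : Lp ℝ 1 μ) ω‖)) μ :=
    ((hI _).const_mul _).add ((integrable_finset_sum _ fun i _ => intExc i).const_mul _)
  have hae : ∀ᵐ ω ∂μ, ∑ i : Fin n, ∑ j : Fin n, ‖(m i - m j : Lp ℝ 1 μ) ω‖
      ≤ (n ^ 2 : ℝ) / 2 * ‖(S - T : Lp ℝ 1 μ) ω‖
        + n * ∑ i : Fin n, (‖(m i - S : Lp ℝ 1 μ) ω‖ + ‖(m i - T : Lp ℝ 1 μ) ω‖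
          - ‖(S - T : Lp ℝ 1 μ) ω‖) := by
    have h1 : ∀ᵐ ω ∂μ, ∀ i j : Fin n, (m i - m j : Lp ℝ 1 μ) ω = m i ω - m j ω := by
      rw [ae_all_iff]; intro i; rw [ae_all_iff]; intro j; exact Lp.coeFn_sub _ _
    have h2 : ∀ᵐ ω ∂μ, ∀ i : Fin n, (m i - S : Lp ℝ 1 μ) ω = m i ω - S ω := by
      rw [ae_all_iff]; intro i; exact Lp.coeFn_sub _ _
    have h3 : ∀ᵐ ω ∂μ, ∀ i : Fin n, (m i - T : Lp ℝ 1 μ) ω = m i ω - T ω := by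
      rw [ae_all_iff]; intro i; exact Lp.coeFn_sub _ _
    have h4 : ∀ᵐ ω ∂μ, (S - T : Lp ℝ 1 μ) ω = S ω - T ω := Lp.coeFn_sub _ _
    filter_upwards [h1, h2, h3, h4] with ω e1 e2 e3 e4
    simp only [e1, e2, e3, e4, Real.norm_eq_abs]
    have := key_real (S ω) (T ω) (Finset.univ : Finset (Fin n)) (fun i => m i ω)
    simpa using this
  have step1 : ∑ i : Fin n, ∑ j : Fin n, ‖m i - m j‖
      = ∫ ω, ∑ i : Fin n, ∑ j : Fin n, ‖(m i - m j : Lp ℝ 1 μ) ω‖ ∂μ := by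
    have h5 : ∀ i : Fin n, ∑ j : Fin n, ∫ ω, ‖(m i - m j : Lp ℝ 1 μ) ω‖ ∂μ
        = ∫ ω, ∑ j : Fin n, ‖(m i - m j : Lp ℝ 1 μ) ω‖ ∂μ :=
      fun i => (integral_finset_sum _ fun j _ => hI _).symm
    simp only [hN, h5]
    exact (integral_finset_sum _ fun i _ => integrable_finset_sum _ fun j _ => hI _).symm
  have step3 : ∫ ω, ((n ^ 2 : ℝ) / 2 * ‖(S - T : Lp ℝ 1 μ) ω‖
      + n * ∑ i : Fin n, (‖(m i - S : Lp ℝ 1 μ) ω‖ + ‖(m i - T : Lp ℝ 1 μ) ω‖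
        - ‖(S - T : Lp ℝ 1 μ) ω‖)) ∂μ
      = (n ^ 2 : ℝ) / 2 * ‖S - T‖ + n * ∑ i, (‖m i - S‖ + ‖m i - T‖ - ‖S - T‖) := by
    rw [integral_add ((hI _).const_mul _) ((integrable_finset_sum _ fun i _ => intExc i).const_mul _),
      integral_const_mul, integral_const_mul,
      integral_finset_sum _ fun i _ => intExc i]
    have h6 : ∀ i : Fin n, ∫ ω, (‖(m i - S : Lp ℝ 1 μ) ω‖ + ‖(m i - T : Lp ℝ 1 μ) ω‖
        - ‖(S - T : Lp ℝ 1 μ) ω‖) ∂μ = ‖m i - S‖ + ‖m i - T‖ - ‖S - T‖ := by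
      intro i
      have hadd : Integrable (fun ω => ‖(m i - S : Lp ℝ 1 μ) ω‖ + ‖(m i - T : Lp ℝ 1 μ) ω‖) μ :=
        (hI _).add (hI _)
      rw [integral_sub hadd (hI _), integral_add (hI _) (hI _), ← hN, ← hN, ← hN]
    simp only [h6, ← hN]
  rw [step1, ← step3]
  exact integral_mono_ae intF intG hae


lemma arith_final (nr ε KL : ℝ) (hn2 : 2 ≤ nr) (hε : 0 < ε)
    (main : 2 * nr * (nr - 1) ≤ (nr ^ 2 + 2 * nr * ε) * KL) :
    2 - 2 / nr - 2 * ε ≤ KL := by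
  have hn0 : (0:ℝ) < nr := by linarith
  have hC : (0:ℝ) < nr ^ 2 + 2 * nr * ε := by nlinarith
  have h1 : (2 / nr) * nr = 2 := by field_simp
  have key : (2 - 2 / nr - 2 * ε) * (nr ^ 2 + 2 * nr * ε) ≤ 2 * nr * (nr - 1) := by
    nlinarith [h1, hn2, hε.le, mul_nonneg hε.le (sq_nonneg (nr - 1)),
      mul_nonneg (mul_nonneg hε.le hε.le) hn0.le]
  nlinarith [key, main, hC]

/-- Let `n ≥ 2`, `0 < ε < 1/2`, and let `f` be a map from the vertices of
`K_{2,n}` (with its unit-length shortest-path metric) into `L₁(μ)` that is `(ε/n)`-efficient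
on each geodesic `s–mᵢ–t`.  If `K` is a Lipschitz constant for `f` and `L` a Lipschitz
constant for `f⁻¹`, then the distortion `K·L` is at least `2 - 2/n - 2ε`. -/
theorem stmt6 {Ω : Type*} [MeasurableSpace Ω] (μ : Measure Ω)
    (n : ℕ) (hn : 2 ≤ n) (ε : ℝ) (hε : 0 < ε) (hε' : ε < 1 / 2)
    (f : Bool ⊕ Fin n → Lp ℝ 1 μ) (K L : ℝ)
    (hK : ∀ u v, ‖f u - f v‖ ≤
      K * ((completeBipartiteGraph Bool (Fin n)).dist u v : ℝ))
    (hL : ∀ u v, ((completeBipartiteGraph Bool (Fin n)).dist u v : ℝ) ≤ L * ‖f u - f v‖)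
    (heff : ∀ i : Fin n,
      ‖f (Sum.inl false) - f (Sum.inr i)‖ + ‖f (Sum.inr i) - f (Sum.inl true)‖ ≤
        (1 + ε / n) * ‖f (Sum.inl false) - f (Sum.inl true)‖) :
    2 - 2 / (n : ℝ) - 2 * ε ≤ K * L := by
  set G := completeBipartiteGraph Bool (Fin n) with hG
  have hn0 : (0:ℝ) < n := by positivity
  have hn2 : (2:ℝ) ≤ n := by exact_mod_cast hn
  -- distance facts
  have hdist2 : ∀ (u v w : Bool ⊕ Fin n), u ≠ v → ¬ G.Adj u v →
      G.Adj u w → G.Adj w v → G.dist u v = 2 := by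
    intro u v w hne hnadj h1 h2
    have hle : G.dist u v ≤ 2 := by
      have := SimpleGraph.dist_le
        (SimpleGraph.Walk.cons h1 (SimpleGraph.Walk.cons h2 SimpleGraph.Walk.nil))
      simpa using this
    have hr : G.Reachable u v :=
      ⟨SimpleGraph.Walk.cons h1 (SimpleGraph.Walk.cons h2 SimpleGraph.Walk.nil)⟩
    have h0 : G.dist u v ≠ 0 := fun h => hne (hr.dist_eq_zero_iff.mp h)
    have hone : G.dist u v ≠ 1 := fun h => hnadj (SimpleGraph.dist_eq_one_iff_adj.mp h)
    omega
  have hdST : G.dist (Sum.inl false) (Sum.inl true) = 2 := by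
    apply hdist2 (w := Sum.inr (⟨0, by omega⟩ : Fin n)) <;> simp [hG]
  have hdij : ∀ i j : Fin n, i ≠ j → G.dist (Sum.inr i) (Sum.inr j) = 2 := by
    intro i j hij
    apply hdist2 (w := Sum.inl false) <;> simp [hG, hij]
  -- abbreviations
  set Sf := f (Sum.inl false)
  set Tf := f (Sum.inl true)
  set m : Fin n → Lp ℝ 1 μ := fun i => f (Sum.inr i) with hm
  set D := ‖Sf - Tf‖ with hD
  have hDK : D ≤ 2 * K := by
    have := hK (Sum.inl false) (Sum.inl true)
    rw [hdST] at this
    push_cast at this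
    linarith
  have hLpos : 0 < L := by
    have h2 := hL (Sum.inl false) (Sum.inl true)
    rw [hdST] at h2
    push_cast at h2
    nlinarith [norm_nonneg (Sf - Tf)]
  have hpair : ∀ i j : Fin n, i ≠ j → 2 / L ≤ ‖m i - m j‖ := by
    intro i j hij
    have h2 := hL (Sum.inr i) (Sum.inr j)
    rw [hdij i j hij] at h2
    push_cast at h2
    rw [div_le_iff₀ hLpos]
    linarith [mul_comm L ‖m i - m j‖]
  have hrow : ∀ i : Fin n, ((n:ℝ) - 1) * (2 / L) ≤ ∑ j, ‖m i - m j‖ := by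
    intro i
    have h1 : ((Finset.univ.erase i).card) • (2 / L) ≤ ∑ j ∈ Finset.univ.erase i, ‖m i - m j‖ :=
      Finset.card_nsmul_le_sum _ _ _ (fun j hj => hpair i j (Ne.symm (Finset.mem_erase.mp hj).1))
    have h2 : ∑ j ∈ Finset.univ.erase i, ‖m i - m j‖ ≤ ∑ j, ‖m i - m j‖ :=
      Finset.sum_le_sum_of_subset_of_nonneg (Finset.subset_univ _) (fun j _ _ => norm_nonneg _)
    have h3 : (Finset.univ.erase i).card = n - 1 := by
      rw [Finset.card_erase_of_mem (Finset.mem_univ i), Finset.card_univ, Fintype.card_fin]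
    rw [h3, nsmul_eq_mul] at h1
    have h4 : ((n - 1 : ℕ) : ℝ) = (n:ℝ) - 1 := by
      rw [Nat.cast_sub (by omega)]; simp
    rw [h4] at h1
    linarith
  have hSL : (n:ℝ) * (((n:ℝ) - 1) * (2 / L)) ≤ ∑ i, ∑ j, ‖m i - m j‖ := by
    have := Finset.card_nsmul_le_sum Finset.univ (fun i => ∑ j, ‖m i - m j‖)
      (((n:ℝ) - 1) * (2 / L)) (fun i _ => hrow i)
    simpa [Finset.card_univ, nsmul_eq_mul] using this
  have hexc : ∀ i : Fin n, ‖m i - Sf‖ + ‖m i - Tf‖ - D ≤ ε / n * D := by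
    intro i
    have h := heff i
    rw [norm_sub_rev (f (Sum.inl false)) (f (Sum.inr i))] at h
    have : ‖m i - Sf‖ + ‖m i - Tf‖ ≤ (1 + ε / n) * D := h
    linarith
  have hsumexc : ∑ i, (‖m i - Sf‖ + ‖m i - Tf‖ - D) ≤ (n:ℝ) * (ε / n * D) := by
    have := Finset.sum_le_card_nsmul Finset.univ (fun i => ‖m i - Sf‖ + ‖m i - Tf‖ - D)
      (ε / n * D) (fun i _ => hexc i)
    simpa [Finset.card_univ, nsmul_eq_mul] using this
  have hNK := norm_key n Sf Tf m
  have hεD : (n:ℝ) * (ε / n * D) = ε * D := by field_simp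
  rw [hεD] at hsumexc
  have hSH : ∑ i, ∑ j, ‖m i - m j‖ ≤ ((n:ℝ) ^ 2 / 2 + n * ε) * D := by
    have h8 := mul_le_mul_of_nonneg_left hsumexc hn0.le
    have h9 : ((n:ℝ) ^ 2 / 2 + n * ε) * D = (n:ℝ) ^ 2 / 2 * D + (n:ℝ) * (ε * D) := by ring
    rw [h9]
    linarith [hNK, h8]
  have hcoef : (0:ℝ) ≤ (n:ℝ) ^ 2 / 2 + n * ε :=
    add_nonneg (by positivity) (mul_nonneg hn0.le hε.le)
  have main : 2 * (n:ℝ) * ((n:ℝ) - 1) ≤ ((n:ℝ) ^ 2 + 2 * n * ε) * (K * L) := by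
    have h7 : ((n:ℝ) ^ 2 / 2 + n * ε) * D ≤ ((n:ℝ) ^ 2 / 2 + n * ε) * (2 * K) :=
      mul_le_mul_of_nonneg_left hDK hcoef
    have h6 := mul_le_mul_of_nonneg_right (hSL.trans (hSH.trans h7)) hLpos.le
    have h5 : (n:ℝ) * (((n:ℝ) - 1) * (2 / L)) * L = 2 * n * ((n:ℝ) - 1) := by
      field_simp
    rw [h5] at h6
    linarith [h6]
  exact arith_final n ε (K * L) hn2 hε main
end

section
/- Let n ≥ 2 and let f : V(K_{2,n}) → L_1 be an embedding whose associated cut measure is supported only on cuts S with ∅ ≠ S ≠ V that are monotone with respect to every geodesic s–m_i–t. Then dist(f) ≥ 2 - 2/n. -/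
/-- A three-term sequence of indicator values changes value at most once. -/
def Monotone3 (a b c : Prop) : Prop := ¬ ((¬ (a ↔ b)) ∧ (¬ (b ↔ c)))

lemma dist_two' {V : Type*} (G : SimpleGraph V) {u v w : V} (huv : u ≠ v)
    (hna : ¬ G.Adj u v) (h1 : G.Adj u w) (h2 : G.Adj w v) : G.dist u v = 2 := by
  have hle : G.dist u v ≤ 2 := by
    have := G.dist_le (h1.toWalk.append h2.toWalk)
    simpa using this
  have h0 : G.dist u v ≠ 0 := by
    have hr : G.Reachable u v := ⟨h1.toWalk.append h2.toWalk⟩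
    have := hr.pos_dist_of_ne huv
    omega
  have hone : G.dist u v ≠ 1 := fun h => hna (SimpleGraph.dist_eq_one_iff_adj.mp h)
  omega

lemma sep_lemma {n : ℕ} (S : Finset (Bool ⊕ Fin n)) (i0 : Fin n)
    (hne : S ≠ ∅) (huniv : S ≠ Finset.univ)
    (hmono : ∀ i : Fin n, Monotone3 (Sum.inl false ∈ S) (Sum.inr i ∈ S) (Sum.inl true ∈ S)) :
    |ind S (Sum.inl false) - ind S (Sum.inl true)| = 1 := by
  by_cases hf : Sum.inl false ∈ S <;> by_cases ht : Sum.inl true ∈ S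
  · exfalso
    apply huniv
    rw [Finset.eq_univ_iff_forall]
    rintro (b | i)
    · cases b <;> assumption
    · have := hmono i
      unfold Monotone3 at this
      tauto
  · simp [ind, hf, ht]
  · simp [ind, hf, ht]
  · exfalso
    apply hne
    rw [Finset.eq_empty_iff_forall_notMem]
    rintro (b | i) h
    · cases b <;> tauto
    · have := hmono i
      unfold Monotone3 at this
      tauto

lemma mid_lemma {n : ℕ} (S : Finset (Bool ⊕ Fin n)) :
    ∑ i : Fin n, ∑ j : Fin n, |ind S (Sum.inr i) - ind S (Sum.inr j)| ≤ (n:ℝ)^2 / 2 := by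
  set g : Fin n → ℝ := fun i => ind S (Sum.inr i) with hg
  set c : ℝ := ∑ i, g i with hc
  have habs : ∀ i j, |g i - g j| = g i + g j - 2 * (g i * g j) := by
    intro i j
    simp only [hg, ind]
    by_cases h1 : Sum.inr i ∈ S <;> by_cases h2 : Sum.inr j ∈ S <;>
      simp [h1, h2] <;> norm_num
  have hsum : ∑ i : Fin n, ∑ j : Fin n, |g i - g j|
      = (n:ℝ) * c + (n:ℝ) * c - 2 * (c * c) := by
    rw [Finset.sum_congr rfl fun i _ => Finset.sum_congr rfl fun j _ => habs i j]
    simp only [Finset.sum_sub_distrib, Finset.sum_add_distrib, ← Finset.mul_sum,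
      ← Finset.sum_mul, Finset.sum_const, Finset.card_univ, Fintype.card_fin,
      nsmul_eq_mul, ← hc]
  rw [hsum]
  nlinarith [sq_nonneg ((n:ℝ) - 2 * c)]

/-- Let `n ≥ 2` and let `f` be an embedding of `K_{2,n}` into `L₁` whose
associated cut measure `μ` is supported only on nontrivial cuts that are monotone with
respect to every geodesic `s–mᵢ–t`.  Then the distortion of `f` is at least `2 - 2/n`. -/
theorem stmt7 (n : ℕ) (hn : 2 ≤ n) (μ : Finset (Bool ⊕ Fin n) → ℝ) (hμ : ∀ S, 0 ≤ μ S)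
    (hsupp : ∀ S : Finset (Bool ⊕ Fin n), μ S ≠ 0 →
      S ≠ ∅ ∧ S ≠ Finset.univ ∧
        ∀ i : Fin n, Monotone3 (Sum.inl false ∈ S) (Sum.inr i ∈ S) (Sum.inl true ∈ S))
    (K L : ℝ)
    (hK : ∀ u v, cutDist μ u v ≤
      K * ((completeBipartiteGraph Bool (Fin n)).dist u v : ℝ))
    (hL : ∀ u v, ((completeBipartiteGraph Bool (Fin n)).dist u v : ℝ) ≤ L * cutDist μ u v) :
    2 - 2 / (n : ℝ) ≤ K * L := by
  set G := completeBipartiteGraph Bool (Fin n) with hGdef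
  have hnR : (0:ℝ) < n := by
    have : 0 < n := by omega
    exact_mod_cast this
  have i0 : Fin n := ⟨0, by omega⟩
  set s : Bool ⊕ Fin n := Sum.inl false with hs
  set t : Bool ⊕ Fin n := Sum.inl true with ht
  -- graph distances
  have hds : G.dist s t = 2 :=
    dist_two' _ (by simp [hs, ht]) (by simp [hGdef, hs, ht])
      (w := Sum.inr i0) (by simp [hGdef, hs]) (by simp [hGdef, ht])
  have hdm : ∀ i j : Fin n, i ≠ j → G.dist (Sum.inr i) (Sum.inr j) = 2 := by
    intro i j hij
    exact dist_two' _ (by simp [hij]) (by simp [hGdef])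
      (w := Sum.inl true) (by simp [hGdef]) (by simp [hGdef])
  -- separation of every supported cut
  have hsep : ∀ S, μ S ≠ 0 → |ind S s - ind S t| = 1 := by
    intro S hS
    obtain ⟨h1, h2, h3⟩ := hsupp S hS
    exact sep_lemma S i0 h1 h2 h3
  -- nonnegativity and basic bounds
  have hcd_nonneg : 0 ≤ cutDist μ s t :=
    Finset.sum_nonneg fun S _ => mul_nonneg (hμ S) (abs_nonneg _)
  have hcd_st : cutDist μ s t ≤ 2 * K := by
    have h := hK s t
    rw [hds] at h
    push_cast at h
    linarith
  have hL0 : 0 ≤ L := by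
    have h := hL s t
    rw [hds] at h
    push_cast at h
    nlinarith
  -- bound on the sum of cut distances between midpoints
  have hP : ∑ i : Fin n, ∑ j : Fin n, cutDist μ (Sum.inr i) (Sum.inr j)
      ≤ (n:ℝ)^2 / 2 * cutDist μ s t := by
    have step1 : ∑ i : Fin n, ∑ j : Fin n, cutDist μ (Sum.inr i) (Sum.inr j)
        = ∑ S : Finset (Bool ⊕ Fin n), ∑ i : Fin n, ∑ j : Fin n,
            μ S * |ind S (Sum.inr i) - ind S (Sum.inr j)| := by
      unfold cutDist
      rw [Finset.sum_congr rfl fun i _ => Finset.sum_comm, Finset.sum_comm]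
    rw [step1]
    have step2 : ∀ S : Finset (Bool ⊕ Fin n), ∑ i : Fin n, ∑ j : Fin n,
        μ S * |ind S (Sum.inr i) - ind S (Sum.inr j)|
        ≤ μ S * ((n:ℝ)^2 / 2 * |ind S s - ind S t|) := by
      intro S
      simp only [← Finset.mul_sum]
      rcases eq_or_ne (μ S) 0 with h | h
      · simp [h]
      · apply mul_le_mul_of_nonneg_left _ (hμ S)
        rw [hsep S h, mul_one]
        exact mid_lemma S
    calc ∑ S : Finset (Bool ⊕ Fin n), ∑ i : Fin n, ∑ j : Fin n,
            μ S * |ind S (Sum.inr i) - ind S (Sum.inr j)|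
        ≤ ∑ S : Finset (Bool ⊕ Fin n), μ S * ((n:ℝ)^2 / 2 * |ind S s - ind S t|) :=
          Finset.sum_le_sum fun S _ => step2 S
      _ = (n:ℝ)^2 / 2 * cutDist μ s t := by
          unfold cutDist
          rw [Finset.mul_sum]
          exact Finset.sum_congr rfl fun S _ => by ring
  -- sum of graph distances between midpoints
  have hGsum : ∑ i : Fin n, ∑ j : Fin n, ((G.dist (Sum.inr i) (Sum.inr j) : ℕ) : ℝ)
      = 2 * n * n - 2 * n := by
    have hterm : ∀ i j : Fin n, ((G.dist (Sum.inr i) (Sum.inr j) : ℕ) : ℝ)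
        = if i = j then 0 else 2 := by
      intro i j
      by_cases h : i = j
      · subst h; simp
      · rw [hdm i j h]; simp [h]
    rw [Finset.sum_congr rfl fun i _ => Finset.sum_congr rfl fun j _ => hterm i j]
    have hrow : ∀ i : Fin n, ∑ j : Fin n, (if i = j then (0:ℝ) else 2) = 2 * n - 2 := by
      intro i
      have : ∀ j : Fin n, (if i = j then (0:ℝ) else 2) = 2 - (if i = j then 2 else 0) := by
        intro j; split <;> ring
      rw [Finset.sum_congr rfl fun j _ => this j, Finset.sum_sub_distrib,
        Finset.sum_const, Finset.sum_ite_eq, Finset.card_univ, Fintype.card_fin]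
      simp [nsmul_eq_mul]
      ring
    rw [Finset.sum_congr rfl fun i _ => hrow i, Finset.sum_const, Finset.card_univ,
      Fintype.card_fin, nsmul_eq_mul]
    ring
  -- the chain of inequalities
  have hchain : ∑ i : Fin n, ∑ j : Fin n, ((G.dist (Sum.inr i) (Sum.inr j) : ℕ) : ℝ)
      ≤ L * ∑ i : Fin n, ∑ j : Fin n, cutDist μ (Sum.inr i) (Sum.inr j) := by
    rw [Finset.mul_sum]
    apply Finset.sum_le_sum
    intro i _
    rw [Finset.mul_sum]
    exact Finset.sum_le_sum fun j _ => hL _ _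
  have hPle : ∑ i : Fin n, ∑ j : Fin n, cutDist μ (Sum.inr i) (Sum.inr j) ≤ (n:ℝ)^2 * K := by
    have h1 : (n:ℝ)^2 / 2 * cutDist μ s t ≤ (n:ℝ)^2 / 2 * (2 * K) :=
      mul_le_mul_of_nonneg_left hcd_st (by positivity)
    nlinarith
  have key : 2 * (n:ℝ) * n - 2 * n ≤ K * L * (n:ℝ)^2 := by
    calc 2 * (n:ℝ) * n - 2 * n
        = ∑ i : Fin n, ∑ j : Fin n, ((G.dist (Sum.inr i) (Sum.inr j) : ℕ) : ℝ) := hGsum.symm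
      _ ≤ L * ∑ i : Fin n, ∑ j : Fin n, cutDist μ (Sum.inr i) (Sum.inr j) := hchain
      _ ≤ L * ((n:ℝ)^2 * K) := mul_le_mul_of_nonneg_left hPle hL0
      _ = K * L * (n:ℝ)^2 := by ring
  rw [← mul_le_mul_iff_of_pos_right (show (0:ℝ) < (n:ℝ)^2 by positivity)]
  have expand : (2 - 2 / (n:ℝ)) * (n:ℝ)^2 = 2 * (n:ℝ) * n - 2 * n := by
    field_simp
  rw [expand]
  exact key
end

section
/- Let (X,d) be a metric space, M ≥ 2 and N ≥ 1 integers, and f : [0,1] → X a non-expansive map such that the restriction of f to the level-(N+1) grid points L_{N+1} = {j·M^{-(N+1)} : 0 ≤ j ≤ M^{N+1}} has distortion at most D. If for at least h of the levels k ∈ {1,...,N} the map f is (ε,δ)-inefficient at level k, then D ≥ εδh/2. -/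
/-- `f` restricted to `[a,b]` is `ε`-efficient at granularity `M`. -/
def EffAtGranularity {X : Type*} [MetricSpace X] (f : ℝ → X) (ε : ℝ) (M : ℕ) (a b : ℝ) :
    Prop :=
  ∑ j ∈ Finset.range M,
      dist (f (a + (b - a) * j / M)) (f (a + (b - a) * (j + 1) / M)) ≤
    (1 + ε) * dist (f a) (f b)

open Classical in
/-- `f` is `(ε,δ)`-inefficient at level `k` (for granularity `M`): at least `δ·M^k` of the
level-`k` intervals `[j M⁻ᵏ, (j+1) M⁻ᵏ]` fail to be `ε`-efficient at granularity `M`. -/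
noncomputable def IneffAtLevel {X : Type*} [MetricSpace X] (f : ℝ → X) (ε δ : ℝ) (M k : ℕ) :
    Prop :=
  δ * (M : ℝ) ^ k ≤
    (((Finset.range (M ^ k)).filter (fun j =>
      ¬ EffAtGranularity f ε M ((j : ℝ) / (M : ℝ) ^ k) ((j + 1 : ℝ) / (M : ℝ) ^ k))).card : ℝ)

lemma sum_range_mul' (g : ℕ → ℝ) (m n : ℕ) :
    ∑ j ∈ Finset.range (m * n), g j
      = ∑ j ∈ Finset.range m, ∑ i ∈ Finset.range n, g (j * n + i) := by
  induction m with
  | zero => simp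
  | succ m ih =>
      rw [Nat.succ_mul, Finset.sum_range_add, ih, Finset.sum_range_succ]

section Aux

variable {X : Type*} [MetricSpace X] (f : ℝ → X) (M : ℕ)

/-- total length of the level-`k` chain -/
noncomputable def Tlen (k : ℕ) : ℝ :=
  ∑ j ∈ Finset.range (M ^ k),
    dist (f ((j : ℝ) / (M : ℝ) ^ k)) (f (((j : ℝ) + 1) / (M : ℝ) ^ k))

variable {M}

lemma pt_eq (hM : 2 ≤ M) (k j : ℕ) (x : ℝ) :
    (j : ℝ) / (M : ℝ) ^ k
        + (((j : ℝ) + 1) / (M : ℝ) ^ k - (j : ℝ) / (M : ℝ) ^ k) * x / M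
      = ((j : ℝ) * M + x) / (M : ℝ) ^ (k + 1) := by
  have hM0 : (M : ℝ) ≠ 0 := by positivity
  have hMk : (M : ℝ) ^ k ≠ 0 := by positivity
  field_simp
  ring

/-- refinement identity -/
lemma Tlen_succ (hM : 2 ≤ M) (k : ℕ) :
    Tlen f M (k + 1)
      = ∑ j ∈ Finset.range (M ^ k), ∑ i ∈ Finset.range M,
          dist (f (((j * M + i : ℕ) : ℝ) / (M : ℝ) ^ (k + 1)))
               (f ((((j * M + i : ℕ) : ℝ) + 1) / (M : ℝ) ^ (k + 1))) := by
  rw [Tlen, show M ^ (k + 1) = M ^ k * M from pow_succ M k]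
  exact sum_range_mul' _ _ _

/-- inner sum equals the efficiency sum -/
lemma inner_eq (hM : 2 ≤ M) (ε : ℝ) (k j : ℕ) :
    ∑ i ∈ Finset.range M,
        dist (f (((j * M + i : ℕ) : ℝ) / (M : ℝ) ^ (k + 1)))
             (f ((((j * M + i : ℕ) : ℝ) + 1) / (M : ℝ) ^ (k + 1)))
      = ∑ i ∈ Finset.range M,
          dist (f ((j : ℝ) / (M : ℝ) ^ k
              + (((j : ℝ) + 1) / (M : ℝ) ^ k - (j : ℝ) / (M : ℝ) ^ k) * i / M))
            (f ((j : ℝ) / (M : ℝ) ^ k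
              + (((j : ℝ) + 1) / (M : ℝ) ^ k - (j : ℝ) / (M : ℝ) ^ k) * (i + 1) / M)) := by
  refine Finset.sum_congr rfl fun i _ => ?_
  rw [pt_eq hM k j (i : ℝ), pt_eq hM k j ((i : ℝ) + 1)]
  push_cast
  ring_nf

/-- triangle inequality : level-k distance ≤ inner sum -/
lemma dist_le_inner (hM : 2 ≤ M) (k j : ℕ) :
    dist (f ((j : ℝ) / (M : ℝ) ^ k)) (f (((j : ℝ) + 1) / (M : ℝ) ^ k))
      ≤ ∑ i ∈ Finset.range M,
          dist (f (((j * M + i : ℕ) : ℝ) / (M : ℝ) ^ (k + 1)))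
               (f ((((j * M + i : ℕ) : ℝ) + 1) / (M : ℝ) ^ (k + 1))) := by
  have hM0 : (M : ℝ) ≠ 0 := by positivity
  have hMk : (M : ℝ) ^ k ≠ 0 := by positivity
  have h0 : ((j * M + 0 : ℕ) : ℝ) / (M : ℝ) ^ (k + 1) = (j : ℝ) / (M : ℝ) ^ k := by
    push_cast; rw [pow_succ]; field_simp; ring
  have hMend : ((j * M + M : ℕ) : ℝ) / (M : ℝ) ^ (k + 1) = ((j : ℝ) + 1) / (M : ℝ) ^ k := by
    push_cast; rw [pow_succ]; field_simp
  have := dist_le_range_sum_dist (fun i : ℕ => f (((j * M + i : ℕ) : ℝ) / (M : ℝ) ^ (k + 1))) M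
  rw [h0, hMend] at this
  refine this.trans (le_of_eq ?_)
  refine Finset.sum_congr rfl fun i _ => ?_
  congr 2
  push_cast
  ring

end Aux

open Classical in
/-- **coarse differentiation.** If a non-expansive `f : [0,1] → X` has
distortion at most `D` on the level-`(N+1)` grid, and is `(ε,δ)`-inefficient at at least `h`
of the levels `1,…,N`, then `D ≥ εδh/2`. -/
theorem stmt8 {X : Type*} [MetricSpace X] (f : ℝ → X) (M N : ℕ) (hM : 2 ≤ M) (hN : 1 ≤ N)
    (ε δ D : ℝ) (hε : 0 < ε) (hδ : 0 < δ) (hD : 0 < D) (h : ℕ)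
    (hnonexp : ∀ x ∈ Set.Icc (0 : ℝ) 1, ∀ y ∈ Set.Icc (0 : ℝ) 1,
      dist (f x) (f y) ≤ |x - y|)
    (hdistortion : ∀ i ≤ M ^ (N + 1), ∀ j ≤ M ^ (N + 1),
      |(i : ℝ) / (M : ℝ) ^ (N + 1) - (j : ℝ) / (M : ℝ) ^ (N + 1)| / D ≤
        dist (f ((i : ℝ) / (M : ℝ) ^ (N + 1))) (f ((j : ℝ) / (M : ℝ) ^ (N + 1))))
    (hineff : h ≤ ((Finset.Icc 1 N).filter (fun k => IneffAtLevel f ε δ M k)).card) :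
    ε * δ * h / 2 ≤ D := by
  have hM0 : (0 : ℝ) < (M : ℝ) := by positivity
  have hMR : (1 : ℝ) < (M : ℝ) := by exact_mod_cast lt_of_lt_of_le one_lt_two (by exact_mod_cast hM)
  -- distortion lower bound for level-k neighbours, k ≤ N+1
  have hdistlow : ∀ k ≤ N + 1, ∀ j, j + 1 ≤ M ^ k →
      1 / ((M : ℝ) ^ k * D) ≤
        dist (f ((j : ℝ) / (M : ℝ) ^ k)) (f (((j : ℝ) + 1) / (M : ℝ) ^ k)) := by
    intro k hk j hj
    have hpow : M ^ k * M ^ (N + 1 - k) = M ^ (N + 1) := by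
      rw [← pow_add]; congr 1; omega
    have h1 : j * M ^ (N + 1 - k) ≤ M ^ (N + 1) := by
      calc j * M ^ (N + 1 - k) ≤ M ^ k * M ^ (N + 1 - k) :=
            Nat.mul_le_mul_right _ (by omega)
        _ = M ^ (N + 1) := hpow
    have h2 : (j + 1) * M ^ (N + 1 - k) ≤ M ^ (N + 1) := by
      calc (j + 1) * M ^ (N + 1 - k) ≤ M ^ k * M ^ (N + 1 - k) :=
            Nat.mul_le_mul_right _ hj
        _ = M ^ (N + 1) := hpow
    have := hdistortion (j * M ^ (N + 1 - k)) h1 ((j + 1) * M ^ (N + 1 - k)) h2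
    have hpowR : (M : ℝ) ^ k * (M : ℝ) ^ (N + 1 - k) = (M : ℝ) ^ (N + 1) := by
      exact_mod_cast congrArg (Nat.cast : ℕ → ℝ) hpow
    have hMk : (M : ℝ) ^ k ≠ 0 := by positivity
    have hMN : (M : ℝ) ^ (N + 1) ≠ 0 := by positivity
    have hMNk : (M : ℝ) ^ (N + 1 - k) ≠ 0 := by positivity
    have e1 : ((j * M ^ (N + 1 - k) : ℕ) : ℝ) / (M : ℝ) ^ (N + 1) = (j : ℝ) / (M : ℝ) ^ k := by
      push_cast
      rw [← hpowR]; field_simp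
    have e2 : (((j + 1) * M ^ (N + 1 - k) : ℕ) : ℝ) / (M : ℝ) ^ (N + 1)
        = ((j : ℝ) + 1) / (M : ℝ) ^ k := by
      push_cast
      rw [← hpowR]; field_simp
    rw [e1, e2] at this
    refine le_trans (le_of_eq ?_) this
    rw [show (j : ℝ) / (M : ℝ) ^ k - ((j : ℝ) + 1) / (M : ℝ) ^ k = -(1 / (M : ℝ) ^ k) by
      field_simp; ring]
    rw [abs_neg, abs_of_nonneg (by positivity)]
    rw [div_div]
  -- monotone step
  have hmono : ∀ k, Tlen f M k ≤ Tlen f M (k + 1) := by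
    intro k
    rw [Tlen_succ f hM k]
    exact Finset.sum_le_sum fun j _ => dist_le_inner f hM k j
  -- inefficient step
  have hstep : ∀ k, 1 ≤ k → k ≤ N → IneffAtLevel f ε δ M k →
      Tlen f M k + ε * δ / D ≤ Tlen f M (k + 1) := by
    intro k hk1 hkN hbad
    classical
    set B := (Finset.range (M ^ k)).filter (fun j : ℕ =>
      ¬ EffAtGranularity f ε M ((j : ℝ) / (M : ℝ) ^ k) (((j : ℝ) + 1) / (M : ℝ) ^ k)) with hB
    have hcard : δ * (M : ℝ) ^ k ≤ (B.card : ℝ) := by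
      rw [IneffAtLevel] at hbad
      convert hbad using 3
      have h1 : ((do let a ← Finset.range (M ^ k); pure ((a : ℝ))) : Finset ℝ)
          = (Finset.range (M ^ k)).image (fun a : ℕ => (a : ℝ)) := by
        ext x; simp [bind_pure_comp]
      rw [h1, Finset.filter_image,
        Finset.card_image_of_injective _ Nat.cast_injective]
    have key : ∀ j ∈ Finset.range (M ^ k),
        dist (f ((j : ℝ) / (M : ℝ) ^ k)) (f (((j : ℝ) + 1) / (M : ℝ) ^ k))
          + (if j ∈ B then ε / ((M : ℝ) ^ k * D) else 0)
        ≤ ∑ i ∈ Finset.range M,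
            dist (f (((j * M + i : ℕ) : ℝ) / (M : ℝ) ^ (k + 1)))
                 (f ((((j * M + i : ℕ) : ℝ) + 1) / (M : ℝ) ^ (k + 1))) := by
      intro j hj
      by_cases hjB : j ∈ B
      · simp only [hjB, if_true]
        have hne : ¬ EffAtGranularity f ε M ((j : ℝ) / (M : ℝ) ^ k)
            (((j : ℝ) + 1) / (M : ℝ) ^ k) := by
          have := (Finset.mem_filter.mp hjB).2
          convert this using 2
        rw [EffAtGranularity] at hne
        push_neg at hne
        have hlow := hdistlow k (by omega) j (Finset.mem_range.mp hj)
        have : (1 + ε) * dist (f ((j : ℝ) / (M : ℝ) ^ k)) (f (((j : ℝ) + 1) / (M : ℝ) ^ k))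
            ≤ ∑ i ∈ Finset.range M,
              dist (f (((j * M + i : ℕ) : ℝ) / (M : ℝ) ^ (k + 1)))
                   (f ((((j * M + i : ℕ) : ℝ) + 1) / (M : ℝ) ^ (k + 1))) := by
          rw [inner_eq f hM ε k j]
          exact le_of_lt hne
        refine le_trans ?_ this
        have hd := mul_le_mul_of_nonneg_left hlow hε.le
        have he : ε * (1 / ((M : ℝ) ^ k * D)) = ε / ((M : ℝ) ^ k * D) := by ring
        rw [he] at hd
        nlinarith
      · simp only [hjB, if_false, add_zero]
        exact dist_le_inner f hM k j
    have hsum := Finset.sum_le_sum key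
    rw [← Tlen_succ f hM k] at hsum
    rw [Finset.sum_add_distrib] at hsum
    have hBsum : ∑ j ∈ Finset.range (M ^ k), (if j ∈ B then ε / ((M : ℝ) ^ k * D) else 0)
        = (B.card : ℝ) * (ε / ((M : ℝ) ^ k * D)) := by
      rw [Finset.sum_ite_mem, Finset.inter_eq_right.mpr (Finset.filter_subset _ _),
        Finset.sum_const, nsmul_eq_mul]
    rw [hBsum] at hsum
    refine le_trans ?_ hsum
    rw [Tlen]
    have : ε * δ / D ≤ (B.card : ℝ) * (ε / ((M : ℝ) ^ k * D)) := by
      have hMk : (0 : ℝ) < (M : ℝ) ^ k := by positivity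
      calc ε * δ / D = δ * (M : ℝ) ^ k * (ε / ((M : ℝ) ^ k * D)) := by
            field_simp
        _ ≤ (B.card : ℝ) * (ε / ((M : ℝ) ^ k * D)) :=
            mul_le_mul_of_nonneg_right hcard (by positivity)
    linarith
  -- chain
  classical
  set P : ℕ → Prop := fun k => IneffAtLevel f ε δ M k with hP
  have chain : ∀ n, n ≤ N →
      (ε * δ / D) * (((Finset.Icc 1 n).filter (fun k => IneffAtLevel f ε δ M k)).card : ℝ)
        ≤ Tlen f M (n + 1) := by
    intro n
    induction n with
    | zero =>
        intro _
        simp only [show Finset.Icc 1 0 = (∅ : Finset ℕ) by rfl, Finset.filter_empty,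
          Finset.card_empty, Nat.cast_zero, mul_zero]
        exact Finset.sum_nonneg fun _ _ => dist_nonneg
    | succ n ih =>
        intro hn
        have ih' := ih (by omega)
        rw [show Finset.Icc 1 (n + 1) = insert (n + 1) (Finset.Icc 1 n) from
          (Finset.insert_Icc_right_eq_Icc_add_one (by omega)).symm]
        by_cases hp : IneffAtLevel f ε δ M (n + 1)
        · rw [Finset.filter_insert, if_pos hp,
            Finset.card_insert_of_notMem (by simp [Finset.mem_filter])]
          push_cast
          have := hstep (n + 1) (by omega) hn hp
          have hεδD : 0 ≤ ε * δ / D := by positivity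
          calc (ε * δ / D) *
                ((((Finset.Icc 1 n).filter (fun k => IneffAtLevel f ε δ M k)).card : ℝ) + 1)
              = (ε * δ / D) *
                (((Finset.Icc 1 n).filter (fun k => IneffAtLevel f ε δ M k)).card : ℝ)
                + ε * δ / D := by ring
            _ ≤ Tlen f M (n + 1) + ε * δ / D := by linarith
            _ ≤ Tlen f M (n + 2) := this
        · rw [Finset.filter_insert, if_neg hp]
          exact le_trans ih' (hmono (n + 1))
  have hchainN := chain N le_rfl
  -- Tlen (N+1) ≤ 1
  have hT1 : Tlen f M (N + 1) ≤ 1 := by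
    have hMN : (0 : ℝ) < (M : ℝ) ^ (N + 1) := by positivity
    have hbound : ∀ j ∈ Finset.range (M ^ (N + 1)),
        dist (f ((j : ℝ) / (M : ℝ) ^ (N + 1))) (f (((j : ℝ) + 1) / (M : ℝ) ^ (N + 1)))
          ≤ 1 / (M : ℝ) ^ (N + 1) := by
      intro j hj
      have hjlt : j + 1 ≤ M ^ (N + 1) := Finset.mem_range.mp hj
      have hjR : (j : ℝ) + 1 ≤ (M : ℝ) ^ (N + 1) := by exact_mod_cast hjlt
      have hx : (j : ℝ) / (M : ℝ) ^ (N + 1) ∈ Set.Icc (0 : ℝ) 1 := by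
        constructor
        · positivity
        · rw [div_le_one hMN]; linarith [Nat.cast_nonneg (α := ℝ) j]
      have hy : ((j : ℝ) + 1) / (M : ℝ) ^ (N + 1) ∈ Set.Icc (0 : ℝ) 1 := by
        constructor
        · positivity
        · rw [div_le_one hMN]; linarith
      refine le_trans (hnonexp _ hx _ hy) (le_of_eq ?_)
      rw [show (j : ℝ) / (M : ℝ) ^ (N + 1) - ((j : ℝ) + 1) / (M : ℝ) ^ (N + 1)
          = -(1 / (M : ℝ) ^ (N + 1)) by field_simp; ring]
      rw [abs_neg, abs_of_nonneg (by positivity)]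
    calc Tlen f M (N + 1) ≤ ∑ _j ∈ Finset.range (M ^ (N + 1)), 1 / (M : ℝ) ^ (N + 1) :=
          Finset.sum_le_sum hbound
      _ = (M ^ (N + 1) : ℕ) * (1 / (M : ℝ) ^ (N + 1)) := by
          rw [Finset.sum_const, Finset.card_range, nsmul_eq_mul]
      _ = 1 := by
          push_cast
          field_simp
  -- combine
  have hc : (h : ℝ) ≤
      (((Finset.Icc 1 N).filter (fun k => IneffAtLevel f ε δ M k)).card : ℝ) := by
    exact_mod_cast hineff
  have hfinal : (ε * δ / D) * (h : ℝ) ≤ 1 := by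
    calc (ε * δ / D) * (h : ℝ)
        ≤ (ε * δ / D) * (((Finset.Icc 1 N).filter
            (fun k => IneffAtLevel f ε δ M k)).card : ℝ) :=
          mul_le_mul_of_nonneg_left hc (by positivity)
      _ ≤ Tlen f M (N + 1) := hchainN
      _ ≤ 1 := hT1
  have : ε * δ * (h : ℝ) ≤ D := by
    rw [div_mul_eq_mul_div, div_le_one hD] at hfinal
    linarith
  have hh : 0 ≤ ε * δ * (h : ℝ) := by positivity
  linarith
end

section
/- Let A, B ≥ 0 be reals with A + B ≤ 1/2 and let n ≥ 1 be an integer. Then (1/2 + B + A/(2n-1) - (4n/(2n-1))·A·B) / (1/2 + A + B) ≥ (2n+1)/(4n). -/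
/-- For reals `A, B ≥ 0` with `A + B ≤ 1/2` and an integer `n ≥ 1`,
`(1/2 + B + A/(2n-1) - (4n/(2n-1))·A·B) / (1/2 + A + B) ≥ (2n+1)/(4n)`. -/
theorem stmt12 (A B : ℝ) (hA : 0 ≤ A) (hB : 0 ≤ B) (hAB : A + B ≤ 1 / 2)
    (n : ℕ) (hn : 1 ≤ n) :
    (2 * (n : ℝ) + 1) / (4 * (n : ℝ)) ≤
      (1 / 2 + B + A / (2 * (n : ℝ) - 1) - (4 * (n : ℝ) / (2 * (n : ℝ) - 1)) * A * B) /
        (1 / 2 + A + B) := by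
  have hm : (1:ℝ) ≤ (n:ℝ) := by exact_mod_cast hn
  set m : ℝ := (n:ℝ) with hmdef
  have h1 : 0 < 2*m - 1 := by linarith
  have h3 : 0 < 1/2 + A + B := by linarith
  rw [div_le_div_iff₀ (by linarith) h3]
  have expand : (1 / 2 + B + A / (2 * m - 1) - 4 * m / (2 * m - 1) * A * B) * (2*m-1)
      = (2*m-1)/2 + (2*m-1)*B + A - 4*m*A*B := by
    field_simp
  have h4 : (2*m+1) * (1/2 + A + B) * (2*m-1) ≤
      ((2*m-1)/2 + (2*m-1)*B + A - 4*m*A*B) * (4*m) := by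
    have hs : (0:ℝ) ≤ 1/2 - A - B := by linarith
    have hcf : (0:ℝ) ≤ 4*m^2 - 1 - 4*m^2*(1/2 - A - B) := by nlinarith [sq_nonneg m]
    nlinarith [sq_nonneg (4*m*A - 2*m + 1 + 2*m*(1/2 - A - B)), mul_nonneg hs hcf]
  rw [← expand] at h4
  nlinarith [h4, h1]
end

section
/- Let n ≥ 2, let V = {s,t,m_1,...,m_n} be the vertex set of K_{2,n}, and let μ be a cut measure on V supported on nontrivial cuts (S ∉ {∅,V}), normalized so that Σ_{S : 1_S(s)≠1_S(t)} μ(S) = 1. Let E be the collection of cuts not monotone with respect to some geodesic s–m_i–t, and suppose μ(E) ≤ ε. Then Σ_{i,j∈[n]} Σ_S μ(S)|1_S(m_i)-1_S(m_j)| ≤ (1+ε)·n²/2. -/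
/-- Vertices of `K_{2,n}`: `Sum.inl false = s`, `Sum.inl true = t`, `Sum.inr i = mᵢ`. -/
abbrev K2nVertex (n : ℕ) := Bool ⊕ Fin n

lemma ind_nonneg {X : Type*} [DecidableEq X] (S : Finset X) (v : X) : 0 ≤ ind S v := by
  unfold ind; split_ifs <;> norm_num

lemma ind_le_one {X : Type*} [DecidableEq X] (S : Finset X) (v : X) : ind S v ≤ 1 := by
  unfold ind; split_ifs <;> norm_num

lemma csum_le (n : ℕ) (S : Finset (K2nVertex n)) :
    ∑ i : Fin n, ∑ j : Fin n, |ind S (Sum.inr i) - ind S (Sum.inr j)| ≤ (n : ℝ) ^ 2 / 2 := by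
  set a : ℝ := ∑ i : Fin n, ind S (Sum.inr i) with ha
  have ha0 : 0 ≤ a := Finset.sum_nonneg fun i _ => ind_nonneg _ _
  have ha1 : a ≤ n := by
    calc a ≤ ∑ _i : Fin n, (1 : ℝ) := Finset.sum_le_sum fun i _ => ind_le_one _ _
    _ = n := by simp
  have hterm : ∀ i j : Fin n, |ind S (Sum.inr i) - ind S (Sum.inr j)| =
      ind S (Sum.inr i) + ind S (Sum.inr j)
        - 2 * (ind S (Sum.inr i) * ind S (Sum.inr j)) := by
    intro i j
    unfold ind; split_ifs <;> norm_num
  simp_rw [hterm]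
  have : ∑ i : Fin n, ∑ j : Fin n,
      (ind S (Sum.inr i) + ind S (Sum.inr j)
        - 2 * (ind S (Sum.inr i) * ind S (Sum.inr j)))
      = (n : ℝ) * a + (n : ℝ) * a - 2 * (a * a) := by
    simp only [Finset.sum_sub_distrib, Finset.sum_add_distrib, Finset.sum_const,
      Finset.card_univ, Fintype.card_fin, nsmul_eq_mul, ← Finset.mul_sum, ← Finset.sum_mul,
      ← ha]
  rw [this]
  nlinarith [sq_nonneg ((n : ℝ) - 2 * a)]

open Classical in
/-- Let `μ` be a cut measure on `V(K_{2,n})` supported on nontrivial cuts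
and normalized so that the cuts separating `s` from `t` have total mass `1`.  If the cuts
that fail to be monotone on some geodesic `s–mᵢ–t` have total mass at most `ε`, then
`Σ_{i,j} Σ_S μ(S)|1_S(mᵢ)-1_S(mⱼ)| ≤ (1+ε)·n²/2`. -/
theorem stmt16 (n : ℕ) (hn : 2 ≤ n) (ε : ℝ) (hε : 0 ≤ ε)
    (μ : Finset (K2nVertex n) → ℝ) (hμ : ∀ S, 0 ≤ μ S)
    (hsupp : ∀ S, μ S ≠ 0 → S ≠ ∅ ∧ S ≠ Finset.univ)
    (hnorm : ∑ S ∈ Finset.univ.filter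
        (fun S : Finset (K2nVertex n) => ¬ ((Sum.inl false ∈ S) ↔ (Sum.inl true ∈ S))),
      μ S = 1)
    (hbad : ∑ S ∈ Finset.univ.filter (fun S : Finset (K2nVertex n) =>
        ¬ ∀ i : Fin n,
          Monotone3 (Sum.inl false ∈ S) (Sum.inr i ∈ S) (Sum.inl true ∈ S)),
      μ S ≤ ε) :
    ∑ i : Fin n, ∑ j : Fin n, ∑ S : Finset (K2nVertex n),
        μ S * |ind S (Sum.inr i) - ind S (Sum.inr j)| ≤
      (1 + ε) * (n : ℝ) ^ 2 / 2 := by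
  classical
  set sep : Finset (Finset (K2nVertex n)) := Finset.univ.filter
      (fun S : Finset (K2nVertex n) => ¬ ((Sum.inl false ∈ S) ↔ (Sum.inl true ∈ S))) with hsep
  set bad : Finset (Finset (K2nVertex n)) := Finset.univ.filter
      (fun S : Finset (K2nVertex n) => ¬ ∀ i : Fin n,
          Monotone3 (Sum.inl false ∈ S) (Sum.inr i ∈ S) (Sum.inl true ∈ S)) with hbd
  -- total mass bound
  have hmem : ∀ S : Finset (K2nVertex n), μ S ≠ 0 → S ∈ sep ∪ bad := by
    intro S hS
    by_cases hst : (Sum.inl false ∈ S) ↔ (Sum.inl true ∈ S)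
    · refine Finset.mem_union_right _ ?_
      rw [hbd, Finset.mem_filter]
      refine ⟨Finset.mem_univ _, ?_⟩
      intro hmono
      obtain ⟨hne, hnu⟩ := hsupp S hS
      have hmid : ∀ i : Fin n, (Sum.inr i ∈ S) ↔ (Sum.inl false ∈ S) := by
        intro i
        have h := hmono i
        unfold Monotone3 at h
        constructor
        · intro hv
          by_contra hs
          exact h ⟨fun hh => hs (hh.mpr hv), fun hh => hs (hst.mpr (hh.mp hv))⟩
        · intro hs
          by_contra hv
          exact h ⟨fun hh => hv (hh.mp hs), fun hh => hv (hh.mpr (hst.mp hs))⟩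
      by_cases hs : Sum.inl false ∈ S
      · apply hnu
        ext v
        simp only [Finset.mem_univ, iff_true]
        rcases v with b | i
        · cases b
          · exact hs
          · exact hst.mp hs
        · exact (hmid i).mpr hs
      · apply hne
        ext v
        simp only [Finset.notMem_empty, iff_false]
        rcases v with b | i
        · cases b
          · exact hs
          · exact fun h => hs (hst.mpr h)
        · exact fun h => hs ((hmid i).mp h)
    · refine Finset.mem_union_left _ ?_
      rw [hsep, Finset.mem_filter]
      exact ⟨Finset.mem_univ _, hst⟩
  have htot : ∑ S : Finset (K2nVertex n), μ S ≤ 1 + ε := by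
    have h1 : ∑ S : Finset (K2nVertex n), μ S = ∑ S ∈ sep ∪ bad, μ S := by
      refine (Finset.sum_subset (Finset.subset_univ _) ?_).symm
      intro S _ hS
      by_contra h
      exact hS (hmem S h)
    have h2 : ∑ S ∈ sep ∪ bad, μ S + ∑ S ∈ sep ∩ bad, μ S
        = ∑ S ∈ sep, μ S + ∑ S ∈ bad, μ S := Finset.sum_union_inter
    have h3 : 0 ≤ ∑ S ∈ sep ∩ bad, μ S := Finset.sum_nonneg fun S _ => hμ S
    rw [h1]
    linarith [hnorm, hbad]
  -- swap sums
  have hswap : (∑ i : Fin n, ∑ j : Fin n, ∑ S : Finset (K2nVertex n),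
        μ S * |ind S (Sum.inr i) - ind S (Sum.inr j)|)
      = ∑ S : Finset (K2nVertex n),
          μ S * ∑ i : Fin n, ∑ j : Fin n, |ind S (Sum.inr i) - ind S (Sum.inr j)| := by
    have h1 : ∀ i : Fin n, (∑ j : Fin n, ∑ S : Finset (K2nVertex n),
        μ S * |ind S (Sum.inr i) - ind S (Sum.inr j)|)
        = ∑ S : Finset (K2nVertex n), ∑ j : Fin n,
            μ S * |ind S (Sum.inr i) - ind S (Sum.inr j)| := fun i => Finset.sum_comm
    simp_rw [h1, Finset.mul_sum]
    exact Finset.sum_comm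
  rw [hswap]
  calc ∑ S : Finset (K2nVertex n),
        μ S * ∑ i : Fin n, ∑ j : Fin n, |ind S (Sum.inr i) - ind S (Sum.inr j)|
      ≤ ∑ S : Finset (K2nVertex n), μ S * ((n : ℝ) ^ 2 / 2) :=
        Finset.sum_le_sum fun S _ =>
          mul_le_mul_of_nonneg_left (csum_le n S) (hμ S)
    _ = (∑ S : Finset (K2nVertex n), μ S) * ((n : ℝ) ^ 2 / 2) := by
        rw [Finset.sum_mul]
    _ ≤ (1 + ε) * ((n : ℝ) ^ 2 / 2) := by
        apply mul_le_mul_of_nonneg_right htot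
        positivity
    _ = (1 + ε) * (n : ℝ) ^ 2 / 2 := by ring
end

section
/- Let (X,d) be a metric space, let P = (x_1,...,x_k) be a 0-efficient sequence in X mapped into L_1 via a cut measure μ on a finite set X (i.e. the associated embedding f satisfies Σ_i ‖f(x_i)-f(x_{i+1})‖_1 = ‖f(x_1)-f(x_k)‖_1). Then every cut S in the support of the separation measure μ^{x_1|x_k} is monotone with respect to P. -/
/-- If the embedding associated to a nonnegative cut measure `μ` on a
finite set `X` is `0`-efficient on a sequence `P = (x₁,…,x_k)` (i.e.
`Σᵢ ‖f(xᵢ)-f(xᵢ₊₁)‖₁ = ‖f(x₁)-f(x_k)‖₁`), then every cut in the support of the separation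
measure `μ^{x₁|x_k}` is monotone with respect to `P`. -/
theorem stmt19 {X : Type*} [Fintype X] [DecidableEq X] (μ : Finset X → ℝ)
    (hμ : ∀ S, 0 ≤ μ S) (x : ℕ → X) (k : ℕ) (hk : 1 ≤ k)
    (heff : ∑ i ∈ Finset.range (k - 1), cutDist μ (x i) (x (i + 1)) =
      cutDist μ (x 0) (x (k - 1))) :
    ∀ S : Finset X, μ S * |ind S (x 0) - ind S (x (k - 1))| ≠ 0 →
      MonotoneWrtCut S x k := by
  intro S hS
  have habs : ∀ (T : Finset X) (u v : X),
      |ind T u - ind T v| = if ind T u = ind T v then 0 else 1 := by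
    intro T u v
    unfold ind
    by_cases hu : u ∈ T <;> by_cases hv : v ∈ T <;> simp [hu, hv]
  have key : ∀ T : Finset X, μ T * |ind T (x 0) - ind T (x (k-1))| ≤
      μ T * ∑ i ∈ Finset.range (k-1), |ind T (x i) - ind T (x (i+1))| := by
    intro T
    apply mul_le_mul_of_nonneg_left _ (hμ T)
    calc |ind T (x 0) - ind T (x (k-1))|
        = |∑ i ∈ Finset.range (k-1), (ind T (x i) - ind T (x (i+1)))| := by
          rw [Finset.sum_range_sub' (fun i => ind T (x i))]
      _ ≤ ∑ i ∈ Finset.range (k-1), |ind T (x i) - ind T (x (i+1))| :=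
          Finset.abs_sum_le_sum_abs _ _
  have hsum : ∑ T : Finset X, μ T * |ind T (x 0) - ind T (x (k-1))| =
      ∑ T : Finset X, μ T * ∑ i ∈ Finset.range (k-1), |ind T (x i) - ind T (x (i+1))| := by
    have h2 : ∑ i ∈ Finset.range (k-1), cutDist μ (x i) (x (i+1)) =
        ∑ T : Finset X, μ T * ∑ i ∈ Finset.range (k-1), |ind T (x i) - ind T (x (i+1))| := by
      unfold cutDist
      rw [Finset.sum_comm]
      exact Finset.sum_congr rfl fun T _ => (Finset.mul_sum _ _ _).symm
    rw [← h2, heff]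
    rfl
  have heq := (Finset.sum_eq_sum_iff_of_le (fun T _ => key T)).mp hsum S (Finset.mem_univ S)
  have hμS : μ S ≠ 0 := fun h => hS (by rw [h]; ring)
  have heq2 : |ind S (x 0) - ind S (x (k-1))| =
      ∑ i ∈ Finset.range (k-1), |ind S (x i) - ind S (x (i+1))| :=
    mul_left_cancel₀ hμS heq
  have hend : |ind S (x 0) - ind S (x (k-1))| = 1 := by
    rw [habs]
    rw [habs] at hS
    by_cases h : ind S (x 0) = ind S (x (k-1)) <;> simp [h] at hS ⊢
  have hcard : ((Finset.range (k-1)).filter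
      (fun i => ind S (x i) ≠ ind S (x (i+1)))).card = (1 : ℝ) := by
    rw [← Finset.sum_boole]
    calc ∑ i ∈ Finset.range (k-1), (if ind S (x i) ≠ ind S (x (i+1)) then (1:ℝ) else 0)
        = ∑ i ∈ Finset.range (k-1), |ind S (x i) - ind S (x (i+1))| := by
          apply Finset.sum_congr rfl
          intro i _
          rw [habs]
          by_cases h : ind S (x i) = ind S (x (i+1)) <;> simp [h]
      _ = |ind S (x 0) - ind S (x (k-1))| := heq2.symm
      _ = 1 := hend
  unfold MonotoneWrtCut
  exact_mod_cast hcard.le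
end
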